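/- The ring of smooth group endomorphisms of ℂ* (with pointwise multiplication as addition and composition as multiplication) is isomorphic to the ring 𝓡 of 2×2 real matrices of the form [[b,0],[c,v]] with b, c ∈ ℝ and v ∈ ℤ. -/

import Mathlib

noncomputable section

open Complex Finset

/-- `g^μ` for `μ = (b + c·i, v) ∈ ℂ × ℤ`: `|g|^(b+ci) · (g/|g|)^v`. -/
noncomputable def cpw (b c : ℝ) (v : ℤ) (g : ℂ) : ℂ :=
  ((‖g‖ : ℂ) ^ ((b : ℂ) + (c : ℂ) * Complex.I)) * (g / (‖g‖ : ℂ)) ^ v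

/-- `g^μ` where `μ` is encoded as a triple `(b, c, v) : ℝ × ℝ × ℤ`. -/
noncomputable def cpwT (t : ℝ × ℝ × ℤ) (g : ℂ) : ℂ := cpw t.1 t.2.1 t.2.2 g

/-- The product `μ₂μ₁ = (b₁b₂, b₁c₂ + c₁v₂, v₁v₂)` in the ring `𝓡 ≅ ℂ × ℤ`. -/
def rmul (μ₂ μ₁ : ℝ × ℝ × ℤ) : ℝ × ℝ × ℤ :=
  (μ₁.1 * μ₂.1, μ₁.1 * μ₂.2.1 + μ₁.2.1 * (μ₂.2.2 : ℝ), μ₁.2.2 * μ₂.2.2)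

/-- The identity element of `𝓡`. -/
def rone : ℝ × ℝ × ℤ := (1, 0, 1)

/-- `⟨α, β⟩ = Σₖ αᵏ βᵏ ∈ 𝓡`. -/
def rinner {n : ℕ} (α β : Fin n → ℝ × ℝ × ℤ) : ℝ × ℝ × ℤ :=
  ∑ k, rmul (α k) (β k)

/-- `χ^α(g₁, …, gₙ) = ∏ₖ gₖ^{αᵏ}`. -/
noncomputable def chi {n : ℕ} (α : Fin n → ℝ × ℝ × ℤ) (g : Fin n → ℂ) : ℂ :=
  ∏ k, cpwT (α k) (g k)

open Manifold

/-- The ring `𝓡` of 2×2 real matrices of the form `[[b,0],[c,v]]` with `b, c ∈ ℝ`, `v ∈ ℤ`,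
as a subring of the ring of 2×2 real matrices. -/
def RMat : Subring (Matrix (Fin 2) (Fin 2) ℝ) where
  carrier := {M | M 0 1 = 0 ∧ ∃ v : ℤ, M 1 1 = (v : ℝ)}
  zero_mem' := ⟨rfl, 0, by simp⟩
  one_mem' := ⟨by simp [Matrix.one_apply], 1, by simp [Matrix.one_apply]⟩
  add_mem' := by
    rintro a b ⟨ha, va, hva⟩ ⟨hb, vb, hvb⟩
    exact ⟨by simp [Matrix.add_apply, ha, hb], va + vb,
      by simp [Matrix.add_apply, hva, hvb]⟩
  neg_mem' := by
    rintro a ⟨ha, va, hva⟩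
    exact ⟨by simp [Matrix.neg_apply, ha], -va, by simp [Matrix.neg_apply, hva]⟩
  mul_mem' := by
    rintro a b ⟨ha, va, hva⟩ ⟨hb, vb, hvb⟩
    refine ⟨?_, va * vb, ?_⟩
    · simp [Matrix.mul_apply, Fin.sum_univ_two, ha, hb]
    · simp [Matrix.mul_apply, Fin.sum_univ_two, ha, hb, hva, hvb]

/-- The type of smooth group endomorphisms of `ℂ* = ℂˣ`. -/
def SmoothEnd : Type :=
  {f : ℂˣ →* ℂˣ // ContMDiff 𝓘(ℝ, ℂ) 𝓘(ℝ, ℂ) (⊤ : ℕ∞) (fun g : ℂˣ => f g)}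

/- ### Auxiliary development -/

local notation "∞'" => ((⊤ : ℕ∞) : WithTop ℕ∞)

namespace SmoothEndAux

/-- `rho w v z = exp (w * log |z|) * z ^ v`. -/
noncomputable def rho (w : ℂ) (v : ℤ) (z : ℂ) : ℂ :=
  Complex.exp (w * (Real.log (‖z‖) : ℝ)) * z ^ v

lemma rho_ne_zero (w : ℂ) (v : ℤ) {z : ℂ} (hz : z ≠ 0) : rho w v z ≠ 0 :=
  mul_ne_zero (Complex.exp_ne_zero _) (zpow_ne_zero _ hz)

lemma rho_one (w : ℂ) (v : ℤ) : rho w v 1 = 1 := by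
  simp [rho]

lemma rho_mul (w : ℂ) (v : ℤ) {z z' : ℂ} (hz : z ≠ 0) (hz' : z' ≠ 0) :
    rho w v (z * z') = rho w v z * rho w v z' := by
  simp only [rho, norm_mul, Real.log_mul (norm_ne_zero_iff.mpr hz) (norm_ne_zero_iff.mpr hz'),
    Complex.ofReal_add, mul_add, Complex.exp_add, mul_zpow]
  ring

lemma rho_add (w w' : ℂ) (v v' : ℤ) {z : ℂ} (hz : z ≠ 0) :
    rho (w + w') (v + v') z = rho w v z * rho w' v' z := by
  simp only [rho, add_mul, Complex.exp_add, zpow_add₀ hz]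
  ring

lemma abs_rho (w : ℂ) (v : ℤ) {z : ℂ} (hz : z ≠ 0) :
    ‖rho w v z‖ = Real.exp ((w.re + v) * Real.log (‖z‖)) := by
  have habs : (0:ℝ) < ‖z‖ := norm_pos_iff.mpr hz
  rw [rho, norm_mul, Complex.norm_exp, norm_zpow]
  have : ‖z‖ ^ v = Real.exp (v * Real.log (‖z‖)) := by
    rw [← Real.exp_log (zpow_pos habs v), Real.log_zpow]
  rw [this, ← Real.exp_add]
  congr 1
  · simp [add_mul]

lemma rho_rho (w₁ w₂ : ℂ) (v₁ v₂ : ℤ) {z : ℂ} (hz : z ≠ 0) :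
    rho w₁ v₁ (rho w₂ v₂ z) = rho (w₁ * (w₂.re + v₂) + w₂ * v₁) (v₁ * v₂) z := by
  rw [rho, abs_rho w₂ v₂ hz, Real.log_exp]
  show Complex.exp (w₁ * (((w₂.re + v₂) * Real.log (‖z‖) : ℝ) : ℂ)) *
      (Complex.exp (w₂ * (Real.log (‖z‖) : ℝ)) * z ^ v₂) ^ v₁ = _
  rw [mul_zpow, ← Complex.exp_int_mul, ← zpow_mul, ← mul_assoc, ← Complex.exp_add, rho]
  rw [mul_comm v₂ v₁]
  congr 2
  push_cast
  ring

lemma contDiffAt_zpow' (v : ℤ) {x : ℂ} (hx : x ≠ 0) :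
    ContDiffAt ℝ ∞' (fun z : ℂ => z ^ v) x := by
  have : ContDiffAt ℂ ∞' (fun z : ℂ => z ^ v) x := by
    cases v with
    | ofNat n => simpa using (contDiff_id.pow n).contDiffAt (x := x)
    | negSucc n =>
      simp only [zpow_negSucc]
      exact ((contDiff_id.pow (n+1)).contDiffAt (x := x)).inv (pow_ne_zero _ hx)
  exact this.restrict_scalars ℝ

lemma contDiffAt_rho (w : ℂ) (v : ℤ) {x : ℂ} (hx : x ≠ 0) :
    ContDiffAt ℝ ∞' (rho w v) x := by
  have hlog : ContDiffAt ℝ ∞' (fun z : ℂ => Real.log (‖z‖)) x := by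
    have h1 : ContDiffAt ℝ ∞' (fun z : ℂ => ‖z‖) x := contDiffAt_norm (𝕜 := ℝ) hx
    have h2 : ContDiffAt ℝ ∞' Real.log ‖x‖ :=
      Real.contDiffAt_log.mpr (norm_ne_zero_iff.mpr hx)
    exact h2.comp x h1
  have hexp : ContDiffAt ℝ ∞' (fun z : ℂ => Complex.exp (w * (Real.log (‖z‖) : ℝ))) x := by
    apply Complex.contDiff_exp.contDiffAt.comp
    exact (contDiffAt_const (c := w)).mul (Complex.ofRealCLM.contDiff.contDiffAt.comp x hlog)
  exact hexp.mul (contDiffAt_zpow' v hx)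

open Manifold in
lemma contMDiff_rho_units (w : ℂ) (v : ℤ) :
    ContMDiff 𝓘(ℝ, ℂ) 𝓘(ℝ, ℂ) ∞' (fun g : ℂˣ => rho w v (g : ℂ)) := by
  intro x
  have h1 : ContMDiffAt 𝓘(ℝ, ℂ) 𝓘(ℝ, ℂ) ∞' (rho w v) ((x : ℂˣ) : ℂ) := by
    rw [contMDiffAt_iff_contDiffAt]
    exact contDiffAt_rho w v x.ne_zero
  exact h1.comp x (Units.contMDiff_val x)

/-- The endomorphism of `ℂˣ` given by `rho w v`. -/
noncomputable def endo (w : ℂ) (v : ℤ) : ℂˣ →* ℂˣ where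
  toFun g := Units.mk0 (rho w v g) (rho_ne_zero w v g.ne_zero)
  map_one' := by ext; simp [rho_one]
  map_mul' g h := by ext; simp [rho_mul w v g.ne_zero h.ne_zero]

@[simp] lemma endo_apply (w : ℂ) (v : ℤ) (g : ℂˣ) :
    ((endo w v g : ℂˣ) : ℂ) = rho w v (g : ℂ) := rfl

/-- The positive-real one-parameter subgroup. -/
noncomputable def posU (t : ℝ) : ℂˣ := Units.mk0 (Complex.exp t) (Complex.exp_ne_zero _)

/-- The circle one-parameter subgroup. -/
noncomputable def cirU (θ : ℝ) : ℂˣ := Units.mk0 (Complex.exp (θ * I)) (Complex.exp_ne_zero _)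

lemma posU_add (s t : ℝ) : posU (s + t) = posU s * posU t := by
  ext; simp [posU, Complex.exp_add]

lemma posU_zero : posU 0 = 1 := by
  ext; simp [posU]

lemma cirU_add (s t : ℝ) : cirU (s + t) = cirU s * cirU t := by
  ext
  simp only [cirU, Units.val_mul, Units.val_mk0, ← Complex.exp_add]
  push_cast
  ring_nf

lemma cirU_zero : cirU 0 = 1 := by
  ext; simp [cirU]

lemma cirU_two_pi : cirU (2 * Real.pi) = 1 := by
  ext
  simp only [cirU, Units.val_mk0, Units.val_one]
  push_cast
  exact Complex.exp_two_pi_mul_I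

lemma posU_mul_cirU (g : ℂˣ) :
    posU (Real.log (‖(g : ℂ)‖)) * cirU (Complex.arg (g : ℂ)) = g := by
  ext
  simp only [posU, cirU, Units.val_mul, Units.val_mk0]
  rw [← Complex.ofReal_exp, Real.exp_log (norm_pos_iff.mpr g.ne_zero)]
  exact Complex.norm_mul_exp_arg_mul_I (g : ℂ)

lemma rho_posU (w : ℂ) (v : ℤ) (t : ℝ) :
    rho w v ((posU t : ℂˣ) : ℂ) = Complex.exp ((w + v) * t) := by
  have h1 : ‖Complex.exp (t : ℂ)‖ = Real.exp t := by
    rw [Complex.norm_exp]; norm_num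
  rw [show ((posU t : ℂˣ) : ℂ) = Complex.exp (t : ℂ) from rfl, rho, h1, Real.log_exp,
    ← Complex.exp_int_mul, ← Complex.exp_add]
  ring_nf

lemma rho_cirU (w : ℂ) (v : ℤ) (θ : ℝ) :
    rho w v ((cirU θ : ℂˣ) : ℂ) = Complex.exp ((v * I) * θ) := by
  have h1 : ‖Complex.exp ((θ : ℂ) * I)‖ = 1 := by
    rw [Complex.norm_exp]; simp
  rw [show ((cirU θ : ℂˣ) : ℂ) = Complex.exp ((θ : ℂ) * I) from rfl, rho, h1, Real.log_one,
    ← Complex.exp_int_mul, ← Complex.exp_add]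
  push_cast
  ring_nf

lemma hasDerivAt_cexp_real (b : ℂ) (u : ℝ) :
    HasDerivAt (fun t : ℝ => Complex.exp (b * t)) (b * Complex.exp (b * u)) u := by
  have h1 : HasDerivAt (fun t : ℝ => (t : ℂ)) 1 u := by
    simpa using (hasDerivAt_id u).ofReal_comp
  have h2 : HasDerivAt (fun t : ℝ => b * (t : ℂ)) b u := by
    simpa using h1.const_mul b
  simpa [mul_comm] using h2.cexp

/-- Two complex coefficients giving the same exponential one-parameter map are equal. -/
lemma exp_coeff_inj {a a' : ℂ} (h : ∀ t : ℝ, Complex.exp (a * t) = Complex.exp (a' * t)) :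
    a = a' := by
  have hd : ∀ b : ℂ, HasDerivAt (fun t : ℝ => Complex.exp (b * t)) b 0 := fun b => by
    simpa using hasDerivAt_cexp_real b 0
  have h2 : HasDerivAt (fun t : ℝ => Complex.exp (a * t)) a' 0 :=
    (hd a').congr_of_eventuallyEq (Filter.Eventually.of_forall h)
  exact (hd a).unique h2

/-- Every differentiable one-parameter multiplicative map into `ℂ` is exponential. -/
lemma one_param {F : ℝ → ℂ} (hF : Differentiable ℝ F) (h1 : F 0 = 1)
    (hmul : ∀ s t : ℝ, F (s + t) = F s * F t) (t : ℝ) :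
    F t = Complex.exp (deriv F 0 * t) := by
  set a := deriv F 0 with ha
  have hd0 : HasDerivAt F a 0 := (hF 0).hasDerivAt
  have hd : ∀ u : ℝ, HasDerivAt F (F u * a) u := by
    intro u
    have h3 : HasDerivAt (fun s : ℝ => s - u) 1 u := by
      simpa using (hasDerivAt_id u).sub_const u
    have h4 : HasDerivAt (fun s : ℝ => F (s - u)) a u := by
      have := hd0.scomp_of_eq u h3 (by simp)
      rw [one_smul] at this
      exact this
    have h5 : HasDerivAt (fun s : ℝ => F u * F (s - u)) (F u * a) u := h4.const_mul (F u)
    apply h5.congr_of_eventuallyEq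
    apply Filter.Eventually.of_forall
    intro s
    show F s = F u * F (s - u)
    rw [← hmul]
    congr 1
    ring
  have hG : ∀ u : ℝ, HasDerivAt (fun s : ℝ => Complex.exp (-a * s) * F s) 0 u := by
    intro u
    have h6 := (hasDerivAt_cexp_real (-a) u).mul (hd u)
    exact h6.congr_deriv (by ring)
  have hconst : (fun s : ℝ => Complex.exp (-a * s) * F s) t =
      (fun s : ℝ => Complex.exp (-a * s) * F s) 0 := by
    exact is_const_of_deriv_eq_zero (fun u => (hG u).differentiableAt)
      (fun u => (hG u).deriv) t 0
  simp only [Complex.ofReal_zero, mul_zero, Complex.exp_zero, one_mul, h1] at hconst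
  have h8 : Complex.exp (a * (t : ℂ)) * Complex.exp (-a * (t : ℂ)) = 1 := by
    rw [← Complex.exp_add, show a * (t:ℂ) + -a * (t:ℂ) = 0 by ring, Complex.exp_zero]
  rw [← one_mul (F t), ← h8, mul_assoc, hconst, mul_one]

open Manifold in
lemma contMDiff_endo (w : ℂ) (v : ℤ) :
    ContMDiff 𝓘(ℝ, ℂ) 𝓘(ℝ, ℂ) ∞' (fun g : ℂˣ => endo w v g) := by
  apply ContMDiff.of_comp_isOpenEmbedding Units.isOpenEmbedding_val
  exact contMDiff_rho_units w v

open Manifold in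
lemma contMDiff_curve (c : ℝ → ℂˣ) (hc : ContDiff ℝ ∞' (fun t => ((c t : ℂˣ) : ℂ))) :
    ContMDiff 𝓘(ℝ, ℝ) 𝓘(ℝ, ℂ) ∞' c := by
  apply ContMDiff.of_comp_isOpenEmbedding Units.isOpenEmbedding_val
  rw [contMDiff_iff_contDiff]
  exact hc

open Manifold in
lemma contDiff_comp_curve {f : ℂˣ →* ℂˣ}
    (hf : ContMDiff 𝓘(ℝ, ℂ) 𝓘(ℝ, ℂ) ∞' (fun g : ℂˣ => f g))
    {c : ℝ → ℂˣ} (hc : ContDiff ℝ ∞' (fun t => ((c t : ℂˣ) : ℂ))) :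
    ContDiff ℝ ∞' (fun t => ((f (c t) : ℂˣ) : ℂ)) := by
  have h2 := (Units.contMDiff_val (𝕜 := ℝ) (R := ℂ)).comp (hf.comp (contMDiff_curve c hc))
  rwa [contMDiff_iff_contDiff] at h2

/-- Classification: every smooth endomorphism of `ℂˣ` is of the form `rho (a - n) n`. -/
lemma exists_endo (f : SmoothEnd) :
    ∃ a : ℂ, ∃ n : ℤ, ∀ g : ℂˣ, ((f.1 g : ℂˣ) : ℂ) = rho (a - n) n (g : ℂ) := by
  set F₁ : ℝ → ℂ := fun t => ((f.1 (posU t) : ℂˣ) : ℂ) with hF₁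
  set F₂ : ℝ → ℂ := fun θ => ((f.1 (cirU θ) : ℂˣ) : ℂ) with hF₂
  have hone : ∞' ≠ 0 := by simp
  have hc1 : ContDiff ℝ ∞' F₁ := by
    apply contDiff_comp_curve f.2
    show ContDiff ℝ ∞' fun t : ℝ => Complex.exp (t : ℂ)
    exact Complex.contDiff_exp.comp Complex.ofRealCLM.contDiff
  have hc2 : ContDiff ℝ ∞' F₂ := by
    apply contDiff_comp_curve f.2
    show ContDiff ℝ ∞' fun θ : ℝ => Complex.exp ((θ : ℂ) * I)
    exact Complex.contDiff_exp.comp (Complex.ofRealCLM.contDiff.mul contDiff_const)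
  have hm1 : ∀ s t : ℝ, F₁ (s + t) = F₁ s * F₁ t := fun s t => by
    rw [hF₁]; simp only [posU_add, map_mul, Units.val_mul]
  have hm2 : ∀ s t : ℝ, F₂ (s + t) = F₂ s * F₂ t := fun s t => by
    rw [hF₂]; simp only [cirU_add, map_mul, Units.val_mul]
  have h10 : F₁ 0 = 1 := by rw [hF₁]; simp only [posU_zero, map_one, Units.val_one]
  have h20 : F₂ 0 = 1 := by rw [hF₂]; simp only [cirU_zero, map_one, Units.val_one]
  set a := deriv F₁ 0 with ha
  set b := deriv F₂ 0 with hb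
  have e1 : ∀ t, F₁ t = Complex.exp (a * t) :=
    one_param (hc1.differentiable hone) h10 hm1
  have e2 : ∀ θ, F₂ θ = Complex.exp (b * θ) :=
    one_param (hc2.differentiable hone) h20 hm2
  -- `b` is `n * I` for an integer `n`
  have h2pi : F₂ (2 * Real.pi) = 1 := by
    rw [hF₂]; simp only [cirU_two_pi, map_one, Units.val_one]
  rw [e2] at h2pi
  obtain ⟨n, hn⟩ := Complex.exp_eq_one_iff.mp h2pi
  have h2pine : ((2 * Real.pi : ℝ) : ℂ) ≠ 0 :=
    Complex.ofReal_ne_zero.mpr (by positivity)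
  have hbn : b = (n : ℂ) * I := by
    apply mul_right_cancel₀ h2pine
    rw [hn]
    push_cast
    ring
  refine ⟨a, n, fun g => ?_⟩
  have hg := posU_mul_cirU g
  have lhs : ((f.1 g : ℂˣ) : ℂ) =
      F₁ (Real.log (‖(g : ℂ)‖)) * F₂ (Complex.arg (g : ℂ)) := by
    conv_lhs => rw [← hg]
    simp only [map_mul, Units.val_mul]
    rfl
  rw [lhs, e1, e2, hbn]
  have rhs : rho (a - n) n (g : ℂ) =
      rho (a - n) n ((posU (Real.log (‖(g : ℂ)‖)) : ℂˣ) : ℂ) *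
      rho (a - n) n ((cirU (Complex.arg (g : ℂ)) : ℂˣ) : ℂ) := by
    rw [← rho_mul _ _ (Units.ne_zero _) (Units.ne_zero _), ← Units.val_mul, hg]
  rw [rhs, rho_posU, rho_cirU, sub_add_cancel]

/-- The `w`-datum read off from a matrix. -/
noncomputable def wOf (A : Matrix (Fin 2) (Fin 2) ℝ) : ℂ :=
  (A 0 0 : ℂ) + (A 1 0 : ℂ) * I - ((round (A 1 1) : ℤ) : ℂ)

/-- The `v`-datum read off from a matrix. -/
noncomputable def vOf (A : Matrix (Fin 2) (Fin 2) ℝ) : ℤ := round (A 1 1)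

lemma vOf_eq {A : Matrix (Fin 2) (Fin 2) ℝ} {v : ℤ} (h : A 1 1 = (v : ℝ)) : vOf A = v := by
  rw [vOf, h, round_intCast]

lemma wOf_eq {A : Matrix (Fin 2) (Fin 2) ℝ} {v : ℤ} (h : A 1 1 = (v : ℝ)) :
    wOf A = (A 0 0 : ℂ) + (A 1 0 : ℂ) * I - (v : ℂ) := by
  rw [wOf, h, round_intCast]

lemma mem_RMat_iff {A : Matrix (Fin 2) (Fin 2) ℝ} :
    A ∈ RMat ↔ A 0 1 = 0 ∧ ∃ v : ℤ, A 1 1 = (v : ℝ) := Iff.rfl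

/-- The map from `RMat` to smooth endomorphisms. -/
noncomputable def psi (M : RMat) : SmoothEnd :=
  ⟨endo (wOf M.1) (vOf M.1), contMDiff_endo _ _⟩

lemma psi_apply (M : RMat) (g : ℂˣ) :
    (((psi M).1 g : ℂˣ) : ℂ) = rho (wOf M.1) (vOf M.1) (g : ℂ) := rfl

lemma psi_add (M N : RMat) (g : ℂˣ) :
    (((psi (M + N)).1 g : ℂˣ) : ℂ) =
      (((psi M).1 g : ℂˣ) : ℂ) * (((psi N).1 g : ℂˣ) : ℂ) := by
  obtain ⟨hM0, vM, hvM⟩ := mem_RMat_iff.mp M.2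
  obtain ⟨hN0, vN, hvN⟩ := mem_RMat_iff.mp N.2
  have hMN : ((M + N : RMat) : Matrix (Fin 2) (Fin 2) ℝ) = M.1 + N.1 := rfl
  have hMN11 : (M.1 + N.1) 1 1 = ((vM + vN : ℤ) : ℝ) := by
    rw [Matrix.add_apply, hvM, hvN]; push_cast; ring
  simp only [psi_apply, hMN]
  rw [vOf_eq hMN11, wOf_eq hMN11, vOf_eq hvM, wOf_eq hvM, vOf_eq hvN, wOf_eq hvN,
    ← rho_add _ _ _ _ g.ne_zero]
  congr 1
  · simp only [Matrix.add_apply]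
    push_cast
    ring

lemma psi_mul (M N : RMat) (g : ℂˣ) :
    (psi (M * N)).1 g = (psi M).1 ((psi N).1 g) := by
  obtain ⟨hM0, vM, hvM⟩ := mem_RMat_iff.mp M.2
  obtain ⟨hN0, vN, hvN⟩ := mem_RMat_iff.mp N.2
  have hMN : ((M * N : RMat) : Matrix (Fin 2) (Fin 2) ℝ) = M.1 * N.1 := rfl
  have hMN11 : (M.1 * N.1) 1 1 = ((vM * vN : ℤ) : ℝ) := by
    rw [Matrix.mul_apply, Fin.sum_univ_two, hN0, hvM, hvN]; push_cast; ring
  apply Units.ext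
  rw [show ((psi M).1 ((psi N).1 g) : ℂ) =
      rho (wOf M.1) (vOf M.1) (rho (wOf N.1) (vOf N.1) (g : ℂ)) from rfl]
  rw [psi_apply, hMN, rho_rho _ _ _ _ g.ne_zero]
  rw [vOf_eq hMN11, wOf_eq hMN11, vOf_eq hvM, wOf_eq hvM, vOf_eq hvN, wOf_eq hvN]
  congr 1
  · have hre : ((N.1 0 0 : ℂ) + (N.1 1 0 : ℂ) * I - (vN : ℂ)).re = N.1 0 0 - vN := by
      simp
    rw [hre, Matrix.mul_apply, Matrix.mul_apply, Fin.sum_univ_two, Fin.sum_univ_two,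
      hM0, hvM]
    push_cast
    ring

lemma psi_injective : Function.Injective psi := by
  intro M N h
  obtain ⟨hM0, vM, hvM⟩ := mem_RMat_iff.mp M.2
  obtain ⟨hN0, vN, hvN⟩ := mem_RMat_iff.mp N.2
  have hpt : ∀ g : ℂˣ, rho (wOf M.1) (vOf M.1) (g : ℂ) = rho (wOf N.1) (vOf N.1) (g : ℂ) := by
    intro g
    have := congrArg (fun f : SmoothEnd => ((f.1 g : ℂˣ) : ℂ)) h
    simpa only [psi_apply] using this
  have h1 : wOf M.1 + vOf M.1 = wOf N.1 + vOf N.1 := by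
    apply exp_coeff_inj
    intro t
    have := hpt (posU t)
    rwa [rho_posU, rho_posU] at this
  have h2 : ((vOf M.1 : ℤ) : ℂ) * I = ((vOf N.1 : ℤ) : ℂ) * I := by
    apply exp_coeff_inj
    intro θ
    have := hpt (cirU θ)
    rwa [rho_cirU, rho_cirU] at this
  have hv : vOf M.1 = vOf N.1 := by
    have := mul_right_cancel₀ Complex.I_ne_zero h2
    exact_mod_cast this
  have hw : (M.1 0 0 : ℂ) + (M.1 1 0 : ℂ) * I = (N.1 0 0 : ℂ) + (N.1 1 0 : ℂ) * I := by
    have := h1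
    rw [wOf_eq hvM, wOf_eq hvN, vOf_eq hvM, vOf_eq hvN] at this
    linear_combination this
  have h00 : M.1 0 0 = N.1 0 0 := by
    have := congrArg Complex.re hw
    simpa using this
  have h10e : M.1 1 0 = N.1 1 0 := by
    have := congrArg Complex.im hw
    simpa using this
  have hvv : vM = vN := by rw [← vOf_eq hvM, ← vOf_eq hvN]; exact hv
  have h11 : M.1 1 1 = N.1 1 1 := by rw [hvM, hvN, hvv]
  have h01 : M.1 0 1 = N.1 0 1 := by rw [hM0, hN0]
  refine Subtype.ext (Matrix.ext fun i j => ?_)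
  fin_cases i <;> fin_cases j
  · exact h00
  · exact h01
  · exact h10e
  · exact h11

lemma psi_surjective : Function.Surjective psi := by
  intro f
  obtain ⟨a, n, hf⟩ := exists_endo f
  refine ⟨⟨!![a.re, 0; a.im, (n : ℝ)], mem_RMat_iff.mpr ⟨by simp, n, by simp⟩⟩, ?_⟩
  have h11 : (!![a.re, 0; a.im, (n : ℝ)]) 1 1 = ((n : ℤ) : ℝ) := by simp
  have e00 : (!![a.re, 0; a.im, (n : ℝ)]) 0 0 = a.re := by simp
  have e10 : (!![a.re, 0; a.im, (n : ℝ)]) 1 0 = a.im := by simp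
  apply Subtype.ext
  apply MonoidHom.ext
  intro g
  apply Units.ext
  show rho (wOf _) (vOf _) (g : ℂ) = _
  rw [wOf_eq h11, vOf_eq h11, hf g, e00, e10, Complex.re_add_im]

end SmoothEndAux

open SmoothEndAux in
/-- the ring of smooth group endomorphisms of `ℂ*` (addition = pointwise
multiplication, multiplication = composition) is isomorphic to the ring `𝓡` of 2×2 real
matrices `[[b,0],[c,v]]` with `b, c ∈ ℝ`, `v ∈ ℤ`: there is a bijection to `𝓡` carrying
pointwise product to addition and composition to multiplication. -/
theorem smoothEnd_ring_iso :
    ∃ e : SmoothEnd ≃ RMat,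
      (∀ f g : SmoothEnd, ∀ x : ℂˣ,
        (((e.symm (e f + e g)).1 x : ℂˣ) : ℂ) = ((f.1 x : ℂˣ) : ℂ) * ((g.1 x : ℂˣ) : ℂ)) ∧
      (∀ f g : SmoothEnd, ∀ x : ℂˣ,
        (e.symm (e f * e g)).1 x = f.1 (g.1 x)) := by
  have hbij : Function.Bijective psi := ⟨psi_injective, psi_surjective⟩
  set E := Equiv.ofBijective psi hbij with hE
  have hfix : ∀ h : SmoothEnd, psi (E.symm h) = h := fun h => E.apply_symm_apply h
  refine ⟨E.symm, ?_, ?_⟩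
  · intro f g x
    have h1 : E.symm.symm (E.symm f + E.symm g) = psi (E.symm f + E.symm g) := rfl
    rw [h1, psi_add, hfix, hfix]
  · intro f g x
    have h1 : E.symm.symm (E.symm f * E.symm g) = psi (E.symm f * E.symm g) := rfl
    rw [h1, psi_mul, hfix, hfix]
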